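/- Write-before-read scheduling: for the memory cell S ≝ w:{w}.S + r:{w}.S + σ:{r,w}.S, the reader R ≝ r̄.0_⊤ and the writer W ≝ w̄.0_⊤ of single-clock CCSˡᵐ, the process (R ∥ W ∥ S)↾{r,w} has exactly one derivable strategic transition, namely a τ-transition arising from the synchronization of W's w̄ with S's w (the read synchronization is blocked because w̄ occurs in the writer's prediction and w blocks r, and the clock σ is blocked because r̄ and w̄ occur in the predictions of R and W). -/
import Mathlib


namespace CCSlm

/-- Labels 𝓛 = R ∪ {σ}: channel names with polarity (rendezvous actions) plus the single clock σ. -/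
inductive Label (Name : Type) : Type
  | pos : Name → Label Name
  | neg : Name → Label Name
  | clock : Label Name

/-- Complementation ℓ ↦ ℓ̄ (an involution, with σ̄ = σ). -/
def Label.bar {Name : Type} : Label Name → Label Name
  | .pos a => .neg a
  | .neg a => .pos a
  | .clock => .clock

/-- Actions Act = 𝓛 ∪ {τ}. -/
inductive Act (Name : Type) : Type
  | lab : Label Name → Act Name
  | tau : Act Name

/-- The (at most one) label of an action, as a set. -/
def Act.labels {Name : Type} : Act Name → Set (Label Name)
  | .lab ℓ => {ℓ}
  | .tau => ∅

/-- α ∈ R (α is a rendezvous action). -/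
def Act.isRendezvous {Name : Type} : Act Name → Prop
  | .lab .clock => False
  | .tau => False
  | .lab _ => True

/-- α ∈ R ∪ {τ}. -/
def Act.isRendezvousOrTau {Name : Type} : Act Name → Prop
  | .lab .clock => False
  | _ => True

/-- Clock horizons H = {⊥,⊤}, as `Bool` (`false` = ⊥ = ∅, `true` = ⊤ = {σ}), ordered by `≤`. -/
abbrev Horizon : Type := Bool

/-- Blocking relations B ⊆ H × 2^𝓛. -/
abbrev Blocking (Name : Type) : Type := Set (Horizon × Set (Label Name))

/-- Predictions ι : H → 2^𝓛. -/
abbrev Pred (Name : Type) : Type := Horizon → Set (Label Name)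

variable {Name PName : Type}

/-- The induced blocking function [B](C) = { ℓ | ∃(C′,L′) ∈ B, C′ ⊆ C, ℓ ∈ L′ }. -/
def blockSet (B : Blocking Name) (C : Horizon) : Set (Label Name) :=
  { ℓ | ∃ C' L, (C', L) ∈ B ∧ C' ≤ C ∧ ℓ ∈ L }

/-- B′ ⊑ B iff [B′](C) ⊆ [B](C) for all C. -/
def bleq (B' B : Blocking Name) : Prop :=
  ∀ C : Horizon, blockSet B' C ⊆ blockSet B C

/-- ι′ ⊑ ι iff ι′(C) ⊆ ι(C) for all C. -/
def pleq (ι' ι : Pred Name) : Prop :=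
  ∀ C : Horizon, ι' C ⊆ ι C

/-- Pointwise union ι1 + ι2 of predictions. -/
def predAdd (ι1 ι2 : Pred Name) : Pred Name := fun C => ι1 C ∪ ι2 C

/-- The empty prediction ι^∅. -/
def emptyPred : Pred Name := fun _ => ∅

/-- eschews(ι, B): for all (C,L′) ∈ B, ι(C) ∩ {ℓ̄ | ℓ ∈ L′} = ∅. -/
def eschews (ι : Pred Name) (B : Blocking Name) : Prop :=
  ∀ C L, (C, L) ∈ B → ι C ∩ (Label.bar '' L) = ∅

/-- Process terms of single-clock CCSˡᵐ (threads are merged into the process grammar):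
process names, parallel composition, restriction, inactive 0_C, prefix α:L′.P, and sum. -/
inductive Proc (Name PName : Type) : Type
  | name : PName → Proc Name PName
  | par : Proc Name PName → Proc Name PName → Proc Name PName
  | restr : Proc Name PName → Set Name → Proc Name PName
  | nil : Horizon → Proc Name PName
  | pre : Act Name → Set (Label Name) → Proc Name PName → Proc Name PName
  | sum : Proc Name PName → Proc Name PName → Proc Name PName

/-- The labels A′ ∪ Ā′ of a set A′ of channel names. -/
def chanLabels (A : Set Name) : Set (Label Name) :=
  { ℓ | ∃ a ∈ A, ℓ = .pos a ∨ ℓ = .neg a }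

/-- σ ∈ 𝓛(P): the clock occurs free in P (through unfolding of process names). -/
inductive HasClock (env : PName → Proc Name PName) : Proc Name PName → Prop
  | nil : HasClock env (.nil true)
  | preClock (L : Set (Label Name)) (P : Proc Name PName) :
      HasClock env (.pre (.lab .clock) L P)
  | preCont {P : Proc Name PName} (α : Act Name) (L : Set (Label Name)) :
      HasClock env P → HasClock env (.pre α L P)
  | parL {P : Proc Name PName} (Q : Proc Name PName) :
      HasClock env P → HasClock env (.par P Q)
  | parR (P : Proc Name PName) {Q : Proc Name PName} :
      HasClock env Q → HasClock env (.par P Q)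
  | sumL {M : Proc Name PName} (N : Proc Name PName) :
      HasClock env M → HasClock env (.sum M N)
  | sumR (M : Proc Name PName) {N : Proc Name PName} :
      HasClock env N → HasClock env (.sum M N)
  | restr {P : Proc Name PName} (A : Set Name) :
      HasClock env P → HasClock env (.restr P A)
  | name (p : PName) : HasClock env (env p) → HasClock env (.name p)

open Classical in
/-- The clock horizon clk(P) = 𝓛(P) ∩ {σ} ∈ H. -/
noncomputable def clk (env : PName → Proc Name PName) (P : Proc Name PName) : Horizon :=
  if HasClock env P then true else false

/-- Initial actions iA of a thread (as a set of labels; τ contributes nothing to predictions). -/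
def iA : Proc Name PName → Set (Label Name)
  | .pre α _ _ => α.labels
  | .sum M N => iA M ∪ iA N
  | _ => ∅

/-- One level of the bounded syntactic prediction; `rec` handles process names
(it is the bounded prediction at the next-lower unfolding bound). -/
def wilAgo (env : PName → Proc Name PName)
    (rec : Horizon → Proc Name PName → Set (Label Name)) :
    Horizon → Proc Name PName → Set (Label Name)
  | _, .nil _ => ∅
  | C, .pre (.lab .clock) _ P =>
      if C = true then {Label.clock} else insert Label.clock (wilAgo env rec C P)
  | C, .pre α _ P => α.labels ∪ wilAgo env rec C P
  | C, .restr P A => wilAgo env rec C P \ chanLabels A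
  | C, .name p => rec C (env p)
  | C, .par P Q => wilAgo env rec C P ∪ wilAgo env rec C Q
  | C, .sum M N => wilAgo env rec C M ∪ wilAgo env rec C N

/-- The bounded syntactic prediction wilAⁿ_C(P) with at most n unfoldings of process names. -/
def wilA (env : PName → Proc Name PName) : ℕ → Horizon → Proc Name PName → Set (Label Name)
  | 0 => wilAgo env fun _ _ => ∅
  | n + 1 => wilAgo env (wilA env n)

/-- iA*_C(P) = ⋃ₙ wilAⁿ_C(P): the labels occurring syntactically in P before any clock in C. -/
def iAstar (env : PName → Proc Name PName) (C : Horizon) (P : Proc Name PName) :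
    Set (Label Name) :=
  ⋃ n : ℕ, wilA env n C P

/-- The prediction iA*₋(P) : C ↦ iA*_C(P). -/
def iAstarPred (env : PName → Proc Name PName) (P : Proc Name PName) : Pred Name :=
  fun C => iAstar env C P

/-- Restriction B↾A of a blocking relation: remove A ∪ Ā from each entry. -/
def restrB (B : Blocking Name) (A : Set Name) : Blocking Name :=
  { q | ∃ C L, (C, L) ∈ B ∧ q = (C, L \ chanLabels A) }

/-- Restriction ι↾A of a prediction: remove A ∪ Ā pointwise. -/
def restrPred (ι : Pred Name) (A : Set Name) : Pred Name :=
  fun C => ι C \ chanLabels A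

/-- Result ℓ ∥ ℓ̄ of synchronisation: a ∥ ā = τ and σ ∥ σ = σ. -/
def syncAct {Name : Type} : Label Name → Act Name
  | .clock => .lab .clock
  | _ => .tau

/-- The strategic labelled transition system of single-clock CCSˡᵐ (Fig. 1):
P —α:B[ι]→ Q. -/
inductive Step (env : PName → Proc Name PName) :
    Proc Name PName → Act Name → Blocking Name → Pred Name → Proc Name PName → Prop
  | act (α : Act Name) (L : Set (Label Name)) (P : Proc Name PName) :
      Step env (.pre α L P) α {(clk env P, L)} emptyPred P
  | sumL {M : Proc Name PName} {α : Act Name} {B : Blocking Name} {ι : Pred Name}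
      {P : Proc Name PName} (N : Proc Name PName) :
      Step env M α B ι P →
      Step env (.sum M N) α B (fun C => ι C ∪ (iA N \ α.labels)) P
  | sumR (M : Proc Name PName) {N : Proc Name PName} {α : Act Name} {B : Blocking Name}
      {ι : Pred Name} {P : Proc Name PName} :
      Step env N α B ι P →
      Step env (.sum M N) α B (fun C => ι C ∪ (iA M \ α.labels)) P
  | con {p : PName} {α : Act Name} {B : Blocking Name} {ι : Pred Name} {P' : Proc Name PName} :
      Step env (env p) α B ι P' →
      Step env (.name p) α B ι P'
  | com {P1 P2 P1' P2' : Proc Name PName} {ℓ : Label Name} {B1 B2 : Blocking Name}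
      {ι1 ι2 : Pred Name} :
      Step env P1 (.lab ℓ) B1 ι1 P1' →
      Step env P2 (.lab ℓ.bar) B2 ι2 P2' →
      eschews ι1 B2 → eschews ι2 B1 →
      Step env (.par P1 P2) (syncAct ℓ) (B1 ∪ B2) (predAdd ι1 ι2) (.par P1' P2')
  | parL {P : Proc Name PName} {α : Act Name} {B : Blocking Name} {ι : Pred Name}
      {P' : Proc Name PName} (Q : Proc Name PName) :
      Step env P α B ι P' →
      (α = .lab .clock → ¬ HasClock env Q) →
      eschews (iAstarPred env Q) B →
      Step env (.par P Q) α B (predAdd ι (iAstarPred env Q)) (.par P' Q)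
  | parR (P : Proc Name PName) {Q : Proc Name PName} {α : Act Name} {B : Blocking Name}
      {ι : Pred Name} {Q' : Proc Name PName} :
      Step env Q α B ι Q' →
      (α = .lab .clock → ¬ HasClock env P) →
      eschews (iAstarPred env P) B →
      Step env (.par P Q) α B (predAdd ι (iAstarPred env P)) (.par P Q')
  | restr {P : Proc Name PName} {α : Act Name} {B : Blocking Name} {ι : Pred Name}
      {Q : Proc Name PName} (A : Set Name) :
      Step env P α B ι Q →
      (∀ ℓ, α = .lab ℓ → ℓ ∉ chanLabels A) →
      Step env (.restr P A) α (restrB B A) (restrPred ι A) (.restr Q A)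

/-- One strategic step (labels existentially quantified). -/
def Tr (env : PName → Proc Name PName) (P Q : Proc Name PName) : Prop :=
  ∃ α B ι, Step env P α B ι Q

/-- Q is a derivative of P: reachable by strategic transitions. -/
def Deriv (env : PName → Proc Name PName) : Proc Name PName → Proc Name PName → Prop :=
  Relation.ReflTransGen (Tr env)

/-- A congruence on processes: an equivalence compatible with the process operators. -/
structure IsCongruence (cong : Proc Name PName → Proc Name PName → Prop) : Prop where
  equiv : Equivalence cong
  pre : ∀ (α : Act Name) (L : Set (Label Name)) {P P' : Proc Name PName},
      cong P P' → cong (.pre α L P) (.pre α L P')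
  sum : ∀ {M M' N N' : Proc Name PName}, cong M M' → cong N N' → cong (.sum M N) (.sum M' N')
  par : ∀ {P P' Q Q' : Proc Name PName}, cong P P' → cong Q Q' → cong (.par P Q) (.par P' Q')
  restr : ∀ (A : Set Name) {P P' : Proc Name PName}, cong P P' → cong (.restr P A) (.restr P' A)

/-- P is observable (modulo cong). -/
def Observable (env : PName → Proc Name PName)
    (cong : Proc Name PName → Proc Name PName → Prop) (P : Proc Name PName) : Prop :=
  ∀ Q Q1 Q2 α1 α2 B1 B2 ι1 ι2,
    Deriv env P Q →
    Step env Q α1 B1 ι1 Q1 → Step env Q α2 B2 ι2 Q2 →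
    (α1 ≠ α2 ∨ ¬ cong Q1 Q2) →
    ∀ ℓ1 ℓ2 : Label Name, α1 = .lab ℓ1 → α2 = .lab ℓ2 → ℓ1 ∈ ι2 true ∧ ℓ2 ∈ ι1 true

/-- α ∉ [B](⊤). -/
def unblockedBy (α : Act Name) (B : Blocking Name) : Prop :=
  ∀ ℓ : Label Name, α = .lab ℓ → ℓ ∉ blockSet B true

/-- Independence (modulo cong) of two transitions out of the same process. -/
def Independent (cong : Proc Name PName → Proc Name PName → Prop)
    (α1 : Act Name) (B1 : Blocking Name) (Q1 : Proc Name PName)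
    (α2 : Act Name) (B2 : Blocking Name) (Q2 : Proc Name PName) : Prop :=
  (α1 = .lab .clock ∧ α2 = .lab .clock) ∨
  (α1.isRendezvousOrTau ∧ α2.isRendezvousOrTau ∧
    ((¬ (α1 = .tau ∧ α2 = .tau) ∧ unblockedBy α1 B2 ∧ unblockedBy α2 B1) ∨
     (α1 = α2 ∧ ¬ cong Q1 Q2)))

/-- The Diamond Property (CR) of a process Q (modulo cong). -/
def DiamondCR (env : PName → Proc Name PName)
    (cong : Proc Name PName → Proc Name PName → Prop) (Q : Proc Name PName) : Prop :=
  ∀ α1 B1 ι1 Q1 α2 B2 ι2 Q2,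
    Step env Q α1 B1 ι1 Q1 → Step env Q α2 B2 ι2 Q2 →
    Independent cong α1 B1 Q1 α2 B2 Q2 →
    ∃ Q1' Q2' B1' ι1' B2' ι2',
      cong Q1' Q2' ∧
      Step env Q1 α2 B2' ι2' Q1' ∧ Step env Q2 α1 B1' ι1' Q2' ∧
      bleq B1' B1 ∧ bleq B2' B2 ∧
      (α1.isRendezvous → pleq ι1' ι1) ∧ (α2.isRendezvous → pleq ι2' ι2)

/-- P is coherent (modulo cong): observable and every derivative satisfies (CR). -/
def Coherent (env : PName → Proc Name PName)
    (cong : Proc Name PName → Proc Name PName → Prop) (P : Proc Name PName) : Prop :=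
  Observable env cong P ∧ ∀ Q, Deriv env P Q → DiamondCR env cong Q

/-- N is a normal form: no τ-transitions. -/
def NormalForm (env : PName → Proc Name PName) (N : Proc Name PName) : Prop :=
  ∀ B ι N', ¬ Step env N .tau B ι N'

/-- One reduction (τ-labelled) step. -/
def Red (env : PName → Proc Name PName) (P Q : Proc Name PName) : Prop :=
  ∃ B ι, Step env P .tau B ι Q

/-- P ⇓ N: P reduces to the normal form N by finitely many τ-steps. -/
def ReducesTo (env : PName → Proc Name PName) (P N : Proc Name PName) : Prop :=
  Relation.ReflTransGen (Red env) P N ∧ NormalForm env N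

/-- Strong bisimulations for the strategic LTS (matching full strategic labels). -/
def IsStrategicBisim (env : PName → Proc Name PName)
    (R : Proc Name PName → Proc Name PName → Prop) : Prop :=
  ∀ P Q, R P Q →
    (∀ α B ι P', Step env P α B ι P' → ∃ Q', Step env Q α B ι Q' ∧ R P' Q') ∧
    (∀ α B ι Q', Step env Q α B ι Q' → ∃ P', Step env P α B ι P' ∧ R P' Q')

/-- Strong bisimilarity for the strategic LTS. -/
def StrategicBisim (env : PName → Proc Name PName) (P Q : Proc Name PName) : Prop :=
  ∃ R, IsStrategicBisim env R ∧ R P Q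

/-- Milner's CCS labelled transition system P —α→ Q on the same syntax. -/
inductive CCSStep (env : PName → Proc Name PName) :
    Proc Name PName → Act Name → Proc Name PName → Prop
  | act (α : Act Name) (L : Set (Label Name)) (P : Proc Name PName) :
      CCSStep env (.pre α L P) α P
  | sumL {M : Proc Name PName} {α : Act Name} {P : Proc Name PName} (N : Proc Name PName) :
      CCSStep env M α P → CCSStep env (.sum M N) α P
  | sumR (M : Proc Name PName) {N : Proc Name PName} {α : Act Name} {P : Proc Name PName} :
      CCSStep env N α P → CCSStep env (.sum M N) α P
  | con {p : PName} {α : Act Name} {P' : Proc Name PName} :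
      CCSStep env (env p) α P' → CCSStep env (.name p) α P'
  | com {P1 P2 P1' P2' : Proc Name PName} (ℓ : Label Name) :
      CCSStep env P1 (.lab ℓ) P1' → CCSStep env P2 (.lab ℓ.bar) P2' →
      CCSStep env (.par P1 P2) .tau (.par P1' P2')
  | parL {P : Proc Name PName} {α : Act Name} {P' : Proc Name PName} (Q : Proc Name PName) :
      CCSStep env P α P' → CCSStep env (.par P Q) α (.par P' Q)
  | parR (P : Proc Name PName) {Q : Proc Name PName} {α : Act Name} {Q' : Proc Name PName} :
      CCSStep env Q α Q' → CCSStep env (.par P Q) α (.par P Q')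
  | restr {P : Proc Name PName} {α : Act Name} {Q : Proc Name PName} (A : Set Name) :
      CCSStep env P α Q → (∀ ℓ, α = .lab ℓ → ℓ ∉ chanLabels A) →
      CCSStep env (.restr P A) α (.restr Q A)

def CCSTr (env : PName → Proc Name PName) (P Q : Proc Name PName) : Prop :=
  ∃ α, CCSStep env P α Q

def CCSDeriv (env : PName → Proc Name PName) : Proc Name PName → Proc Name PName → Prop :=
  Relation.ReflTransGen (CCSTr env)

/-- Strong bisimulations for Milner's CCS LTS. -/
def IsCCSBisim (env : PName → Proc Name PName)
    (R : Proc Name PName → Proc Name PName → Prop) : Prop :=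
  ∀ P Q, R P Q →
    (∀ α P', CCSStep env P α P' → ∃ Q', CCSStep env Q α Q' ∧ R P' Q') ∧
    (∀ α Q', CCSStep env Q α Q' → ∃ P', CCSStep env P α P' ∧ R P' Q')

/-- Strong bisimilarity ∼ for Milner's CCS. -/
def CCSBisim (env : PName → Proc Name PName) (P Q : Proc Name PName) : Prop :=
  ∃ R, IsCCSBisim env R ∧ R P Q

/-- P is determinate (modulo ∼) in Milner's CCS. -/
def CCSDeterminate (env : PName → Proc Name PName) (P : Proc Name PName) : Prop :=
  ∀ Q, CCSDeriv env P Q → ∀ α Q1 Q2,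
    CCSStep env Q α Q1 → CCSStep env Q α Q2 → CCSBisim env Q1 Q2

/-- P is strongly confluent (modulo ∼) in Milner's CCS. -/
def CCSStronglyConfluent (env : PName → Proc Name PName) (P : Proc Name PName) : Prop :=
  CCSDeterminate env P ∧
  ∀ Q, CCSDeriv env P Q → ∀ α1 α2 Q1 Q2, α1 ≠ α2 →
    CCSStep env Q α1 Q1 → CCSStep env Q α2 Q2 →
    ∃ Q1' Q2', CCSBisim env Q1' Q2' ∧ CCSStep env Q1 α2 Q1' ∧ CCSStep env Q2 α1 Q2'

/-- The clock-free, priority-free fragment: inactive subterms are 0_⊥, no prefix action is σ,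
and all blocking sets are empty. -/
def ClockFree : Proc Name PName → Prop
  | .nil C => C = false
  | .pre α L P => α ≠ .lab .clock ∧ L = ∅ ∧ ClockFree P
  | .sum M N => ClockFree M ∧ ClockFree N
  | .par P Q => ClockFree P ∧ ClockFree Q
  | .restr P _ => ClockFree P
  | .name _ => True

/-- Well-formedness: direct subprocesses of threads have the same clock horizon as the thread. -/
def WF (env : PName → Proc Name PName) : Proc Name PName → Prop
  | .nil _ => True
  | .pre α L P => WF env P ∧ (HasClock env (.pre α L P) ↔ HasClock env P)
  | .sum M N => WF env M ∧ WF env N ∧ (HasClock env M ↔ HasClock env N)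
  | .par P Q => WF env P ∧ WF env Q
  | .restr P _ => WF env P
  | .name _ => True

/-- P has exactly one derivable strategic transition, namely α to Q (with some label B[ι]). -/
def UniqueStep (env : PName → Proc Name PName) (P : Proc Name PName) (α : Act Name)
    (Q : Proc Name PName) : Prop :=
  ∃ B ι, Step env P α B ι Q ∧
    ∀ α' B' ι' Q', Step env P α' B' ι' Q' → α' = α ∧ B' = B ∧ ι' = ι ∧ Q' = Q

end CCSlm

namespace CCSlm

/-- Channel names r and w. -/
inductive CH : Type
  | r
  | w

/-- A single process name S. -/
inductive PN : Type
  | S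

def rLab : Label CH := .pos .r
def wLab : Label CH := .pos .w

/-- The body of S ≝ w:{w}.S + r:{w}.S + σ:{r,w}.S. -/
def Sbody : Proc CH PN :=
  .sum (.pre (.lab wLab) {wLab} (.name .S))
    (.sum (.pre (.lab rLab) {wLab} (.name .S))
      (.pre (.lab .clock) {rLab, wLab} (.name .S)))

def envS : PN → Proc CH PN := fun _ => Sbody

/-- The reader R ≝ r̄.0_⊤. -/
def Rd : Proc CH PN := .pre (.lab (.neg .r)) ∅ (.nil true)

/-- The writer W ≝ w̄.0_⊤. -/
def Wr : Proc CH PN := .pre (.lab (.neg .w)) ∅ (.nil true)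

/-- (R ∥ W ∥ S)↾{r,w}. -/
def RWS : Proc CH PN := .restr (.par Rd (.par Wr (.name .S))) {CH.r, CH.w}

/-- The target of the write synchronisation: (R ∥ 0_⊤ ∥ S)↾{r,w}. -/
def RWS' : Proc CH PN := .restr (.par Rd (.par (.nil true) (.name .S))) {CH.r, CH.w}

/-! ### Auxiliary lemmas -/

lemma hasClock_S : HasClock envS (.name PN.S) :=
  .name _ (.sumR _ (.sumR _ (.preClock _ _)))

lemma clk_S : clk envS (.name PN.S) = true := if_pos hasClock_S

lemma clk_nil : clk envS (.nil true : Proc CH PN) = true := if_pos .nil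

/-- The canonical prediction of S's w-transition. -/
def ιS : Pred CH := fun _ => {rLab, Label.clock}

lemma wilA_Rd (n : ℕ) (C : Horizon) : wilA envS n C Rd = {Label.neg CH.r} := by
  cases n <;> simp [wilA, wilAgo, Rd, Act.labels]

lemma iAstar_Rd (C : Horizon) : iAstar envS C Rd = {Label.neg CH.r} := by
  simp [iAstar, wilA_Rd]

lemma wmem_iAstar_Wr (C : Horizon) : Label.neg CH.w ∈ iAstar envS C Wr := by
  refine Set.mem_iUnion.2 ⟨0, ?_⟩
  simp [wilA, wilAgo, Wr, Act.labels]

lemma not_eschews_Wr {B : Blocking CH} {L : Set (Label CH)}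
    (hB : ((true : Horizon), L) ∈ B) (hw : wLab ∈ L) :
    ¬ eschews (iAstarPred envS Wr) B := by
  intro h
  have h1 := h true L hB
  have h2 : Label.neg CH.w ∈ iAstarPred envS Wr true ∩ (Label.bar '' L) :=
    ⟨wmem_iAstar_Wr true, ⟨wLab, hw, rfl⟩⟩
  rw [h1] at h2
  exact h2

lemma eschews_empty (B : Blocking CH) : eschews (emptyPred : Pred CH) B := by
  intro C L _
  simp [emptyPred]

/-- Inversion of strategic steps of the memory cell S. -/
lemma step_S {α : Act CH} {B : Blocking CH} {ι : Pred CH} {P' : Proc CH PN}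
    (h : Step envS (.name PN.S) α B ι P') :
    P' = .name PN.S ∧ ∃ L, B = {((true : Horizon), L)} ∧ wLab ∈ L ∧
      ((α = .lab wLab ∧ L = {wLab} ∧ ι = ιS) ∨ α = .lab rLab ∨ α = .lab .clock) := by
  cases h with
  | con h' =>
    have h'' : Step envS Sbody α B ι P' := h'
    rw [Sbody] at h''
    cases h'' with
    | sumL N h1 =>
      cases h1
      refine ⟨rfl, {wLab}, by rw [clk_S], rfl, Or.inl ⟨rfl, rfl, ?_⟩⟩
      funext C
      ext ℓ
      simp only [ιS, emptyPred, iA, Act.labels, Set.mem_union, Set.mem_empty_iff_false,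
        Set.mem_diff, Set.mem_singleton_iff, Set.mem_insert_iff, false_or]
      constructor
      · rintro ⟨h, -⟩; exact h
      · rintro (rfl | rfl) <;> simp [rLab, wLab]
    | sumR M h1 =>
      cases h1 with
      | sumL N h2 =>
        cases h2
        exact ⟨rfl, {wLab}, by rw [clk_S], rfl, Or.inr (Or.inl rfl)⟩
      | sumR M h2 =>
        cases h2
        exact ⟨rfl, {rLab, wLab}, by rw [clk_S], by simp, Or.inr (Or.inr rfl)⟩

/-- Inversion of strategic steps of Wr. -/
lemma step_Wr {α : Act CH} {B : Blocking CH} {ι : Pred CH} {P' : Proc CH PN}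
    (h : Step envS Wr α B ι P') :
    α = .lab (.neg CH.w) ∧ B = {((true : Horizon), (∅ : Set (Label CH)))} ∧
      ι = emptyPred ∧ P' = .nil true := by
  cases h
  exact ⟨rfl, by rw [clk_nil], rfl, rfl⟩

/-- Inversion of strategic steps of Rd. -/
lemma step_Rd {α : Act CH} {B : Blocking CH} {ι : Pred CH} {P' : Proc CH PN}
    (h : Step envS Rd α B ι P') : α = .lab (.neg CH.r) := by
  cases h
  rfl

/-- The blocking relation of the write synchronisation. -/
def Bτ : Blocking CH :=
  {((true : Horizon), (∅ : Set (Label CH)))} ∪ {((true : Horizon), ({wLab} : Set (Label CH)))}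

/-- Inversion of strategic steps of W ∥ S. -/
lemma step_WS {α : Act CH} {B : Blocking CH} {ι : Pred CH} {Q' : Proc CH PN}
    (h : Step envS (.par Wr (.name PN.S)) α B ι Q') :
    (α = .tau ∧ B = Bτ ∧ ι = predAdd emptyPred ιS ∧ Q' = .par (.nil true) (.name PN.S)) ∨
    α = .lab (.neg CH.w) := by
  cases h with
  | com h1 h2 he1 he2 =>
    obtain ⟨hℓ, hB1, hι1, hP1⟩ := step_Wr h1
    cases hℓ
    obtain ⟨hP2, L, hB2, hwL, hcase⟩ := step_S h2
    rcases hcase with ⟨hα, hL, hι2⟩ | hα | hα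
    · subst hB1 hB2 hι1 hι2 hP1 hP2 hL
      exact Or.inl ⟨rfl, rfl, rfl, rfl⟩
    · exact absurd hα (by simp [wLab, rLab, Label.bar])
    · exact absurd hα (by simp [wLab, Label.bar])
  | parL Q h1 _ _ =>
    obtain ⟨hα, -, -, -⟩ := step_Wr h1
    exact Or.inr hα
  | parR P h1 _ he =>
    obtain ⟨-, L, hB, hwL, -⟩ := step_S h1
    exact absurd he (not_eschews_Wr (by rw [hB]; rfl) hwL)

/-- The canonical w-step of S. -/
lemma stepS_w : Step envS (.name PN.S) (.lab wLab)
    {((true : Horizon), ({wLab} : Set (Label CH)))} ιS (.name PN.S) := by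
  have hB : ({((true : Horizon), ({wLab} : Set (Label CH)))} : Blocking CH) =
      {(clk envS (.name PN.S), {wLab})} := by rw [clk_S]
  have hι : ιS = fun C => emptyPred C ∪
      (iA (.sum (.pre (.lab rLab) {wLab} (.name PN.S))
        (.pre (.lab .clock) {rLab, wLab} (.name PN.S))) \ (Act.lab wLab).labels) := by
    funext C
    ext ℓ
    simp only [ιS, emptyPred, iA, Act.labels, Set.mem_union, Set.mem_empty_iff_false,
      Set.mem_diff, Set.mem_singleton_iff, Set.mem_insert_iff, false_or]
    constructor
    · rintro (rfl | rfl) <;> simp [rLab, wLab]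
    · rintro ⟨h, -⟩; exact h
  rw [hB, hι]
  exact Step.con (p := PN.S)
    (Step.sumL _ (Step.act (.lab wLab) {wLab} (.name PN.S)))

/-- The canonical w̄-step of Wr. -/
lemma stepWr_w : Step envS Wr (.lab (.neg CH.w))
    {((true : Horizon), (∅ : Set (Label CH)))} emptyPred (.nil true) := by
  have hB : ({((true : Horizon), (∅ : Set (Label CH)))} : Blocking CH) =
      {(clk envS (.nil true : Proc CH PN), ∅)} := by rw [clk_nil]
  rw [hB]
  exact Step.act _ _ _

lemma eschews_ιS : eschews ιS {((true : Horizon), (∅ : Set (Label CH)))} := by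
  intro C L hCL
  rw [Set.mem_singleton_iff, Prod.mk.injEq] at hCL
  rw [hCL.2]
  simp

lemma eschews_Rd_Bτ : eschews (iAstarPred envS Rd) Bτ := by
  intro C L hCL
  rcases hCL with h | h <;> rw [Set.mem_singleton_iff, Prod.mk.injEq] at h <;> rw [h.2]
  · simp
  · ext ℓ
    simp only [iAstarPred, iAstar_Rd, Set.mem_inter_iff, Set.mem_singleton_iff,
      Set.image_singleton, Set.mem_empty_iff_false, iff_false, not_and]
    rintro rfl h
    simp [wLab, Label.bar] at h

/-- The τ-step of W ∥ S. -/
lemma step_WS_tau : Step envS (.par Wr (.name PN.S)) .tau Bτ (predAdd emptyPred ιS)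
    (.par (.nil true) (.name PN.S)) :=
  Step.com stepWr_w stepS_w (eschews_empty _) eschews_ιS

lemma neg_mem_chanLabels (a : CH) (ha : a ∈ ({CH.r, CH.w} : Set CH)) :
    Label.neg a ∈ chanLabels ({CH.r, CH.w} : Set CH) :=
  ⟨a, ha, Or.inr rfl⟩

/-- Write-before-read scheduling: (R ∥ W ∥ S)↾{r,w} has exactly one derivable strategic
transition, a τ-transition arising from the synchronisation of W's w̄ with S's w. -/
theorem write_before_read : UniqueStep envS RWS .tau RWS' := by
  refine ⟨restrB Bτ {CH.r, CH.w},
    restrPred (predAdd (predAdd emptyPred ιS) (iAstarPred envS Rd)) {CH.r, CH.w}, ?_, ?_⟩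
  · exact Step.restr _
      (Step.parR Rd step_WS_tau (by intro h; cases h) eschews_Rd_Bτ)
      (by intro ℓ h; cases h)
  · intro α' B' ι' Q' h
    rw [RWS] at h
    cases h with
    | restr A h1 hA =>
      cases h1 with
      | parL Q h2 _ _ =>
        have hα := step_Rd h2
        exact absurd (hA _ hα) (by simp [neg_mem_chanLabels CH.r (by simp)])
      | parR P h2 _ _ =>
        rcases step_WS h2 with ⟨hα, hB, hι, hQ⟩ | hα
        · subst hα hB hι hQ
          exact ⟨rfl, rfl, rfl, rfl⟩
        · exact absurd (hA _ hα) (by simp [neg_mem_chanLabels CH.w (by simp)])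
      | com h2 h3 _ _ =>
        have hα := step_Rd h2
        rw [Act.lab.injEq] at hα
        subst hα
        rcases step_WS h3 with ⟨hα, -, -, -⟩ | hα <;> exact absurd hα (by simp [Label.bar])

end CCSlm
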